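/- Among spherical quadrilaterals with given side lengths ℓ₁, ℓ₂, ℓ₃, ℓ₄ (sufficiently small so all quantities are defined), the area, viewed as a function A(x) of x = 1 + cos d where d is the diagonal separating sides {ℓ₁,ℓ₂} from {ℓ₃,ℓ₄}, has a critical point at x₀ = ((c₁+c₂)√((1−c₃)(1−c₄)) + (c₃+c₄)√((1−c₁)(1−c₂))) / (√((1−c₁)(1−c₂)) + √((1−c₃)(1−c₄))), where cᵢ = cos ℓᵢ; moreover D₁/D₂ = √((1−c₁)(1−c₂))/√((1−c₃)(1−c₄)) at x₀, where D₁, D₂ are the determinants of the two triangles cut by the diagonal. -/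

import Mathlib

open Real Set

set_option maxHeartbeats 2000000 in
/-- For spherical quadrilaterals with given side lengths `ℓ₁, ℓ₂, ℓ₃, ℓ₄`
(sufficiently small so that all quantities are defined), the area
`A(x) = 2(arctan(D₁/u₁) + arctan(D₂/u₂))`, viewed as a function of
`x = 1 + cos d` where `d` is the diagonal separating `{ℓ₁, ℓ₂}` from
`{ℓ₃, ℓ₄}`, has a critical point at
`x₀ = ((c₁+c₂)√((1-c₃)(1-c₄)) + (c₃+c₄)√((1-c₁)(1-c₂))) /
      (√((1-c₁)(1-c₂)) + √((1-c₃)(1-c₄)))`, `cᵢ = cos ℓᵢ`;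
moreover `D₁/D₂ = √((1-c₁)(1-c₂))/√((1-c₃)(1-c₄))` at `x₀`. -/
theorem spherical_quadrilateral_area_critical_point
    (ℓ₁ ℓ₂ ℓ₃ ℓ₄ : ℝ)
    (h₁ : ℓ₁ ∈ Ioo 0 (π / 2)) (h₂ : ℓ₂ ∈ Ioo 0 (π / 2))
    (h₃ : ℓ₃ ∈ Ioo 0 (π / 2)) (h₄ : ℓ₄ ∈ Ioo 0 (π / 2))
    (c₁ c₂ c₃ c₄ : ℝ)
    (hc₁ : c₁ = Real.cos ℓ₁) (hc₂ : c₂ = Real.cos ℓ₂)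
    (hc₃ : c₃ = Real.cos ℓ₃) (hc₄ : c₄ = Real.cos ℓ₄)
    (u₁ u₂ D₁ D₂ A : ℝ → ℝ)
    (hu₁ : ∀ x, u₁ x = c₁ + c₂ + x) (hu₂ : ∀ x, u₂ x = c₃ + c₄ + x)
    (hD₁ : ∀ x, D₁ x = Real.sqrt (-(c₁ + c₂) ^ 2 + 2 * (c₁ * c₂ + 1) * x - x ^ 2))
    (hD₂ : ∀ x, D₂ x = Real.sqrt (-(c₃ + c₄) ^ 2 + 2 * (c₃ * c₄ + 1) * x - x ^ 2))
    (hA : ∀ x, A x = 2 * (Real.arctan (D₁ x / u₁ x) + Real.arctan (D₂ x / u₂ x)))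
    (x₀ : ℝ)
    (hx₀ : x₀ = ((c₁ + c₂) * Real.sqrt ((1 - c₃) * (1 - c₄)) +
        (c₃ + c₄) * Real.sqrt ((1 - c₁) * (1 - c₂))) /
      (Real.sqrt ((1 - c₁) * (1 - c₂)) + Real.sqrt ((1 - c₃) * (1 - c₄))))
    (hD₁₀ : 0 < D₁ x₀) (hD₂₀ : 0 < D₂ x₀)
    (hu₁₀ : 0 < u₁ x₀) (hu₂₀ : 0 < u₂ x₀) :
    HasDerivAt A 0 x₀ ∧
    D₁ x₀ / D₂ x₀ =
      Real.sqrt ((1 - c₁) * (1 - c₂)) / Real.sqrt ((1 - c₃) * (1 - c₄)) := by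
  have hπ := Real.pi_pos
  -- basic bounds on the cᵢ
  have hlt : ∀ ℓ : ℝ, ℓ ∈ Ioo 0 (π / 2) → Real.cos ℓ < 1 := by
    intro ℓ h
    have := Real.cos_lt_cos_of_nonneg_of_le_pi (le_refl 0) (by linarith [h.2]) h.1
    simpa using this
  have hc₁1 : c₁ < 1 := hc₁ ▸ hlt ℓ₁ h₁
  have hc₂1 : c₂ < 1 := hc₂ ▸ hlt ℓ₂ h₂
  have hc₃1 : c₃ < 1 := hc₃ ▸ hlt ℓ₃ h₃
  have hc₄1 : c₄ < 1 := hc₄ ▸ hlt ℓ₄ h₄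
  have hpos : ∀ ℓ : ℝ, ℓ ∈ Ioo 0 (π / 2) → 0 < Real.cos ℓ := by
    intro ℓ h
    exact Real.cos_pos_of_mem_Ioo ⟨by linarith [h.1], h.2⟩
  have hc₁0 : 0 < c₁ := hc₁ ▸ hpos ℓ₁ h₁
  have hc₂0 : 0 < c₂ := hc₂ ▸ hpos ℓ₂ h₂
  have hc₃0 : 0 < c₃ := hc₃ ▸ hpos ℓ₃ h₃
  have hc₄0 : 0 < c₄ := hc₄ ▸ hpos ℓ₄ h₄
  set s₁ : ℝ := Real.sqrt ((1 - c₁) * (1 - c₂)) with hs₁def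
  set s₂ : ℝ := Real.sqrt ((1 - c₃) * (1 - c₄)) with hs₂def
  have hs₁pos : 0 < s₁ := Real.sqrt_pos.mpr (by nlinarith)
  have hs₂pos : 0 < s₂ := Real.sqrt_pos.mpr (by nlinarith)
  have hF : s₁ ^ 2 = (1 - c₁) * (1 - c₂) := Real.sq_sqrt (by nlinarith)
  have hG : s₂ ^ 2 = (1 - c₃) * (1 - c₄) := Real.sq_sqrt (by nlinarith)
  have hssum : s₁ + s₂ ≠ 0 := by positivity
  have hX : x₀ * (s₁ + s₂) = (c₁ + c₂) * s₂ + (c₃ + c₄) * s₁ := by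
    rw [hx₀]; field_simp
  -- squares of the determinants
  have hQ₁pos : 0 < -(c₁ + c₂) ^ 2 + 2 * (c₁ * c₂ + 1) * x₀ - x₀ ^ 2 :=
    Real.sqrt_pos.mp (hD₁ x₀ ▸ hD₁₀)
  have hQ₂pos : 0 < -(c₃ + c₄) ^ 2 + 2 * (c₃ * c₄ + 1) * x₀ - x₀ ^ 2 :=
    Real.sqrt_pos.mp (hD₂ x₀ ▸ hD₂₀)
  have hQ₁ : (D₁ x₀) ^ 2 = -(c₁ + c₂) ^ 2 + 2 * (c₁ * c₂ + 1) * x₀ - x₀ ^ 2 := by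
    rw [hD₁ x₀]; exact Real.sq_sqrt hQ₁pos.le
  have hQ₂ : (D₂ x₀) ^ 2 = -(c₃ + c₄) ^ 2 + 2 * (c₃ * c₄ + 1) * x₀ - x₀ ^ 2 := by
    rw [hD₂ x₀]; exact Real.sq_sqrt hQ₂pos.le
  -- the key square identity
  have hsq : ((D₁ x₀) ^ 2 * s₂ ^ 2) * (s₁ + s₂) ^ 2 = ((D₂ x₀) ^ 2 * s₁ ^ 2) * (s₁ + s₂) ^ 2 := by
    linear_combination (s₂ ^ 2 * (s₁ + s₂) ^ 2) * hQ₁ - (s₁ ^ 2 * (s₁ + s₂) ^ 2) * hQ₂ +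
      (x₀*s₁^3 + x₀*s₁^2*s₂ - x₀*s₁*s₂^2 - x₀*s₂^3 - 2*s₁^3*c₃*c₄ + s₁^3*c₃ + s₁^3*c₄ - 2*s₁^3 + s₁^2*s₂*c₁ + s₁^2*s₂*c₂ - 2*s₁^2*s₂*c₃*c₄ - 2*s₁^2*s₂ + 2*s₁*s₂^2*c₁*c₂ - s₁*s₂^2*c₃ - s₁*s₂^2*c₄ + 2*s₁*s₂^2 + 2*s₂^3*c₁*c₂ - s₂^3*c₁ - s₂^3*c₂ + 2*s₂^3) * hX +
      (- 2*s₁^2*c₃^2*c₄ + 2*s₁^2*c₃^2 - 2*s₁^2*c₃*c₄^2 + 4*s₁^2*c₃*c₄ - 2*s₁^2*c₃ + 2*s₁^2*c₄^2 - 2*s₁^2*c₄ - 2*s₁*s₂*c₁*c₃*c₄ + 2*s₁*s₂*c₁*c₃ + 2*s₁*s₂*c₁*c₄ - 2*s₁*s₂*c₁ - 2*s₁*s₂*c₂*c₃*c₄ + 2*s₁*s₂*c₂*c₃ + 2*s₁*s₂*c₂*c₄ - 2*s₁*s₂*c₂ - 2*s₁*s₂*c₃^2*c₄ + 2*s₁*s₂*c₃^2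 - 2*s₁*s₂*c₃*c₄^2 + 4*s₁*s₂*c₃*c₄ - 2*s₁*s₂*c₃ + 2*s₁*s₂*c₄^2 - 2*s₁*s₂*c₄ + 2*s₂^2*c₁*c₂*c₃ + 2*s₂^2*c₁*c₂*c₄ - 2*s₂^2*c₁*c₃*c₄ - 2*s₂^2*c₁ - 2*s₂^2*c₂*c₃*c₄ - 2*s₂^2*c₂ + 2*s₂^2*c₃ + 2*s₂^2*c₄ - 2*c₁*c₂*c₃^2*c₄ + 2*c₁*c₂*c₃^2 - 2*c₁*c₂*c₃*c₄^2 + 4*c₁*c₂*c₃*c₄ - 2*c₁*c₂*c₃ + 2*c₁*c₂*c₄^2 - 2*c₁*c₂*c₄ + 2*c₁*c₃^2*c₄ - 2*c₁*c₃^2 + 2*c₁*c₃*c₄^2 - 4*c₁*c₃*c₄ + 2*c₁*c₃ - 2*c₁*c₄^2 + 2*c₁*c₄ + 2*c₂*c₃^2*c₄ - 2*c₂*c₃^2 + 2*c₂*c₃*c₄^2 - 4*c₂*c₃*c₄ + 2*c₂*c₃ - 2*c₂*c₄^2 + 2*c₂*c₄ - 2*c₃^2*c₄ + 2*c₃^2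 - 2*c₃*c₄^2 + 4*c₃*c₄ - 2*c₃ + 2*c₄^2 - 2*c₄) * hF +
      (2*s₁*s₂*c₁^2*c₂ - 2*s₁*s₂*c₁^2 + 2*s₁*s₂*c₁*c₂^2 + 2*s₁*s₂*c₁*c₂*c₃ + 2*s₁*s₂*c₁*c₂*c₄ - 4*s₁*s₂*c₁*c₂ - 2*s₁*s₂*c₁*c₃ - 2*s₁*s₂*c₁*c₄ + 2*s₁*s₂*c₁ - 2*s₁*s₂*c₂^2 - 2*s₁*s₂*c₂*c₃ - 2*s₁*s₂*c₂*c₄ + 2*s₁*s₂*c₂ + 2*s₁*s₂*c₃ + 2*s₁*s₂*c₄ + 2*s₂^2*c₁^2*c₂ - 2*s₂^2*c₁^2 + 2*s₂^2*c₁*c₂^2 - 4*s₂^2*c₁*c₂ + 2*s₂^2*c₁ - 2*s₂^2*c₂^2 + 2*s₂^2*c₂ + 2*c₁^2*c₂^2*c₃ + 2*c₁^2*c₂^2*c₄ - 4*c₁^2*c₂*c₃ - 4*c₁^2*c₂*c₄ + 2*c₁^2*c₃ + 2*c₁^2*c₄ - 4*c₁*c₂^2*c₃ - 4*c₁*c₂^2*c₄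 + 8*c₁*c₂*c₃ + 8*c₁*c₂*c₄ - 4*c₁*c₃ - 4*c₁*c₄ + 2*c₂^2*c₃ + 2*c₂^2*c₄ - 4*c₂*c₃ - 4*c₂*c₄ + 2*c₃ + 2*c₄) * hG
  have hsq' : (D₁ x₀) ^ 2 * s₂ ^ 2 = (D₂ x₀) ^ 2 * s₁ ^ 2 :=
    mul_right_cancel₀ (pow_ne_zero 2 hssum) hsq
  -- the ratio identity
  have hratio : D₁ x₀ * s₂ = D₂ x₀ * s₁ := by
    nlinarith [mul_pos hD₁₀ hs₂pos, mul_pos hD₂₀ hs₁pos, hsq']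
  have hratio' : D₁ x₀ / D₂ x₀ = s₁ / s₂ := by
    rw [div_eq_div_iff (ne_of_gt hD₂₀) (ne_of_gt hs₂pos)]
    linarith [hratio]
  refine ⟨?_, hratio'⟩
  -- now the derivative part
  have hE₀ : (c₁ + c₂ - x₀) * s₂ = (x₀ - (c₃ + c₄)) * s₁ := by linear_combination -hX
  have hE₁ : (c₁ + c₂ - x₀) * (D₂ x₀) * (s₁ * s₂) = (x₀ - (c₃ + c₄)) * (D₁ x₀) * (s₁ * s₂) := by
    linear_combination (D₂ x₀ * s₁) * hE₀ - ((x₀ - (c₃ + c₄)) * s₁) * hratio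
  have hE : (c₁ + c₂ - x₀) * (D₂ x₀) = (x₀ - (c₃ + c₄)) * (D₁ x₀) :=
    mul_right_cancel₀ (by positivity) hE₁
  -- x₀ is positive
  have hU₁ : (u₁ x₀) ^ 2 + (D₁ x₀) ^ 2 = 2 * x₀ * ((1 + c₁) * (1 + c₂)) := by
    rw [hu₁]; linear_combination hQ₁
  have hx₀pos : 0 < x₀ := by nlinarith [sq_nonneg (u₁ x₀), pow_pos hD₁₀ 2]
  -- derivatives of the building blocks
  have hq₁' : HasDerivAt (fun x : ℝ => -(c₁ + c₂) ^ 2 + 2 * (c₁ * c₂ + 1) * x - x ^ 2)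
      (2 * (c₁ * c₂ + 1) - 2 * x₀) x₀ := by
    have h := (((hasDerivAt_id x₀).const_mul (2 * (c₁ * c₂ + 1))).const_add
      (-(c₁ + c₂) ^ 2)).sub (hasDerivAt_pow 2 x₀)
    exact h.congr_deriv (by push_cast; ring)
  have hq₂' : HasDerivAt (fun x : ℝ => -(c₃ + c₄) ^ 2 + 2 * (c₃ * c₄ + 1) * x - x ^ 2)
      (2 * (c₃ * c₄ + 1) - 2 * x₀) x₀ := by
    have h := (((hasDerivAt_id x₀).const_mul (2 * (c₃ * c₄ + 1))).const_add
      (-(c₃ + c₄) ^ 2)).sub (hasDerivAt_pow 2 x₀)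
    exact h.congr_deriv (by push_cast; ring)
  have hD₁' : HasDerivAt D₁ (1 / (2 * D₁ x₀) * (2 * (c₁ * c₂ + 1) - 2 * x₀)) x₀ := by
    have h := (Real.hasDerivAt_sqrt (ne_of_gt hQ₁pos)).comp x₀ hq₁'
    have hfun : D₁ = Real.sqrt ∘ (fun x : ℝ => -(c₁ + c₂) ^ 2 + 2 * (c₁ * c₂ + 1) * x - x ^ 2) :=
      funext fun x => hD₁ x
    rw [hfun]
    exact h
  have hD₂' : HasDerivAt D₂ (1 / (2 * D₂ x₀) * (2 * (c₃ * c₄ + 1) - 2 * x₀)) x₀ := by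
    have h := (Real.hasDerivAt_sqrt (ne_of_gt hQ₂pos)).comp x₀ hq₂'
    have hfun : D₂ = Real.sqrt ∘ (fun x : ℝ => -(c₃ + c₄) ^ 2 + 2 * (c₃ * c₄ + 1) * x - x ^ 2) :=
      funext fun x => hD₂ x
    rw [hfun]
    exact h
  have hu₁' : HasDerivAt u₁ 1 x₀ := by
    have h := (hasDerivAt_id x₀).const_add (c₁ + c₂)
    have hfun : u₁ = fun x : ℝ => c₁ + c₂ + x := funext fun x => hu₁ x
    rw [hfun]; exact h
  have hu₂' : HasDerivAt u₂ 1 x₀ := by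
    have h := (hasDerivAt_id x₀).const_add (c₃ + c₄)
    have hfun : u₂ = fun x : ℝ => c₃ + c₄ + x := funext fun x => hu₂ x
    rw [hfun]; exact h
  have hdiv₁ := hD₁'.div hu₁' (ne_of_gt hu₁₀)
  have hdiv₂ := hD₂'.div hu₂' (ne_of_gt hu₂₀)
  have hat₁ := (Real.hasDerivAt_arctan (D₁ x₀ / u₁ x₀)).comp x₀ hdiv₁
  have hat₂ := (Real.hasDerivAt_arctan (D₂ x₀ / u₂ x₀)).comp x₀ hdiv₂
  have hsum := (hat₁.add hat₂).const_mul (2 : ℝ)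
  have hAfun : A = fun x => 2 * (Real.arctan (D₁ x / u₁ x) + Real.arctan (D₂ x / u₂ x)) :=
    funext fun x => hA x
  rw [hAfun]
  refine hsum.congr_deriv ?_
  -- it remains to show the derivative value vanishes
  have hU₂ : (u₂ x₀) ^ 2 + (D₂ x₀) ^ 2 = 2 * x₀ * ((1 + c₃) * (1 + c₄)) := by
    rw [hu₂]; linear_combination hQ₂
  have ha₁ : u₁ x₀ ≠ 0 := ne_of_gt hu₁₀
  have ha₂ : u₂ x₀ ≠ 0 := ne_of_gt hu₂₀
  have hd₁ : D₁ x₀ ≠ 0 := ne_of_gt hD₁₀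
  have hd₂ : D₂ x₀ ≠ 0 := ne_of_gt hD₂₀
  have hx₀ne : x₀ ≠ 0 := ne_of_gt hx₀pos
  have ht₁ : (1 + c₁) * (1 + c₂) ≠ 0 := by positivity
  have ht₂ : (1 + c₃) * (1 + c₄) ≠ 0 := by positivity
  -- per-triangle derivative values
  have hv₁ : 1 / (1 + (D₁ x₀ / u₁ x₀) ^ 2) *
      ((1 / (2 * D₁ x₀) * (2 * (c₁ * c₂ + 1) - 2 * x₀) * u₁ x₀ - D₁ x₀ * 1) / u₁ x₀ ^ 2) =
      (c₁ + c₂ - x₀) / (2 * x₀ * D₁ x₀) := by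
    rw [hu₁]
    rw [hu₁] at hu₁₀
    have ha₁' : c₁ + c₂ + x₀ ≠ 0 := ne_of_gt hu₁₀
    have h1p : 1 + (D₁ x₀ / (c₁ + c₂ + x₀)) ^ 2 ≠ 0 := by positivity
    field_simp
    linear_combination (-(c₁ + c₂ + x₀)) * hQ₁
  have hv₂ : 1 / (1 + (D₂ x₀ / u₂ x₀) ^ 2) *
      ((1 / (2 * D₂ x₀) * (2 * (c₃ * c₄ + 1) - 2 * x₀) * u₂ x₀ - D₂ x₀ * 1) / u₂ x₀ ^ 2) =
      (c₃ + c₄ - x₀) / (2 * x₀ * D₂ x₀) := by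
    rw [hu₂]
    rw [hu₂] at hu₂₀
    have ha₂' : c₃ + c₄ + x₀ ≠ 0 := ne_of_gt hu₂₀
    field_simp
    linear_combination (-(c₃ + c₄ + x₀)) * hQ₂
  rw [hv₁, hv₂]
  rw [div_add_div _ _ (by positivity) (by positivity)]
  have hnum : (c₁ + c₂ - x₀) * (2 * x₀ * D₂ x₀) + (2 * x₀ * D₁ x₀) * (c₃ + c₄ - x₀) = 0 := by
    linear_combination (2 * x₀) * hE
  rw [hnum]
  simp
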